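/- Let $m, n$ be normalizers of $D(E)$ in $A_R(G_E)$ over an integral domain $R$. Then an infinite path $x$ lies in $\operatorname{dom}(mn)$ if and only if $x \in \operatorname{dom}(n)$ and $\alpha_n(x) \in \operatorname{dom}(m)$; in that case $\alpha_m(\alpha_n(x)) = \alpha_{mn}(x)$. -/

import Mathlib

open scoped Classical BigOperators

namespace LPA

structure DirGraph where
  V : Type
  E : Type
  r : E → V
  s : E → V

structure InfPath (G : DirGraph) where
  edges : ℕ → G.E
  compat : ∀ i, G.s (edges i) = G.r (edges (i + 1))

structure FinPath (G : DirGraph) where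
  len : ℕ
  vtx : G.V
  edges : ℕ → G.E
  compat : ∀ i, i + 1 < len → G.s (edges i) = G.r (edges (i + 1))
  vtx_eq : 0 < len → vtx = G.r (edges 0)

variable {G : DirGraph}

/-- The source vertex of a finite path (its `vtx` if it has length `0`). -/
def FinPath.src (μ : FinPath G) : G.V :=
  if μ.len = 0 then μ.vtx else G.s (μ.edges (μ.len - 1))

/-- The range vertex of an infinite path. -/
def InfPath.rng (x : InfPath G) : G.V := G.r (x.edges 0)

/-- `x ∼ₖ y`: shift equivalence with lag `k`. -/
def ShiftEquiv (x : InfPath G) (k : ℤ) (y : InfPath G) : Prop :=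
  ∃ a b N : ℕ, (a : ℤ) - (b : ℤ) = k ∧ ∀ i, N ≤ i → x.edges (i + a) = y.edges (i + b)

def RowFinite (G : DirGraph) : Prop := ∀ v : G.V, {e : G.E | G.r e = v}.Finite

def NoSources (G : DirGraph) : Prop := ∀ v : G.V, ∃ e : G.E, G.r e = v

/-- `x = μ z`: the infinite path `x` is the concatenation of the finite path `μ`
with the infinite path `z`. -/
def IsConcat (μ : FinPath G) (z x : InfPath G) : Prop :=
  z.rng = μ.src ∧ ∀ i, x.edges i = if i < μ.len then μ.edges i else z.edges (i - μ.len)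

/-- `ρ = μ β`: concatenation of finite paths. -/
def IsAppendF (μ β ρ : FinPath G) : Prop :=
  ρ.len = μ.len + β.len ∧ (∀ i < μ.len, ρ.edges i = μ.edges i) ∧
    (∀ i < β.len, ρ.edges (μ.len + i) = β.edges i) ∧
    ρ.vtx = if μ.len = 0 then β.vtx else μ.vtx

/-- Triples `(x, k, y)`: the ambient type of the graph groupoid. -/
abbrev GTrip (G : DirGraph) := InfPath G × ℤ × InfPath G

def gmul (g h : GTrip G) : GTrip G := (g.1, g.2.1 + h.2.1, h.2.2)
def ginv (g : GTrip G) : GTrip G := (g.2.2, -g.2.1, g.1)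
def unit (x : InfPath G) : GTrip G := (x, 0, x)

def GraphGroupoid (G : DirGraph) : Set (GTrip G) :=
  {g | ShiftEquiv g.1 g.2.1 g.2.2}

/-- `BC` for subsets of the groupoid. -/
def setMul (B C : Set (GTrip G)) : Set (GTrip G) :=
  {g | ∃ γ ∈ B, ∃ η ∈ C, γ.2.2 = η.1 ∧ g = gmul γ η}

def setInv (B : Set (GTrip G)) : Set (GTrip G) := ginv '' B

/-- The cylinder set `Z(μ)` of infinite paths extending `μ`. -/
def Zset (μ : FinPath G) : Set (InfPath G) :=
  {x | (∀ i < μ.len, x.edges i = μ.edges i) ∧ x.rng = μ.vtx}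

/-- The basic compact open bisection `Z(μ,ν) = {(μz, |μ|-|ν|, νz)}`. -/
def ZZ (μ ν : FinPath G) : Set (GTrip G) :=
  {g | ∃ z : InfPath G, IsConcat μ z g.1 ∧ IsConcat ν z g.2.2 ∧
    g.2.1 = (μ.len : ℤ) - (ν.len : ℤ)}

instance : TopologicalSpace (InfPath G) :=
  TopologicalSpace.generateFrom {S | ∃ μ : FinPath G, S = Zset μ}

def unitSet (S : Set (InfPath G)) : Set (GTrip G) := {g | ∃ x ∈ S, g = unit x}

variable (R : Type) [CommRing R]

/-- The diagonal `D(E)` of the Steinberg algebra. -/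
noncomputable def Diag (G : DirGraph) : Submodule R (GTrip G → R) :=
  Submodule.span R {f | ∃ μ : FinPath G, f = Set.indicator (unitSet (Zset μ)) 1}

/-- The Steinberg algebra `A_R(G_E)` as a set of functions on the groupoid. -/
noncomputable def Steinberg (G : DirGraph) : Submodule R (GTrip G → R) :=
  Submodule.span R
    {f | ∃ μ ν : FinPath G, μ.src = ν.src ∧ f = Set.indicator (ZZ μ ν) 1}

variable {R}

/-- Convolution product. -/
noncomputable def conv (f g : GTrip G → R) : GTrip G → R :=
  fun γ => ∑ᶠ η ∈ {η : GTrip G | η.1 = γ.1}, f η * g (gmul (ginv η) γ)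

/-- Involution `f^*(γ) = star (f (γ⁻¹))`. -/
def starf [StarRing R] (f : GTrip G → R) : GTrip G → R :=
  fun γ => star (f (ginv γ))

/-- `n` is a normalizer of the diagonal. -/
def IsNormalizer [StarRing R] (n : GTrip G → R) : Prop :=
  n ∈ Steinberg R G ∧ ∀ d ∈ Diag R G,
    conv (conv n d) (starf n) ∈ Diag R G ∧ conv (conv (starf n) d) n ∈ Diag R G

/-- `α_n(x) = r(supp(n) x)` (given by a choice; unique for normalizers). -/
noncomputable def alphaFun (n : GTrip G → R) (x : InfPath G) : InfPath G :=
  if h : ∃ g : GTrip G, n g ≠ 0 ∧ g.2.2 = x then h.choose.1 else x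

/-- `dom(n) = supp(n^* n)`, as a subset of the infinite path space. -/
noncomputable def domSet [StarRing R] (n : GTrip G → R) : Set (InfPath G) :=
  {x | conv (starf n) n (unit x) ≠ 0}

/-- `ran(n) = supp(n n^*)`, as a subset of the infinite path space. -/
noncomputable def ranSet [StarRing R] (n : GTrip G → R) : Set (InfPath G) :=
  {x | conv n (starf n) (unit x) ≠ 0}

/-- `d ∘ α_n`, viewed as a function on the groupoid vanishing off `s(supp n)`. -/
noncomputable def dAlpha (d n : GTrip G → R) : GTrip G → R := fun g =>
  if (g.2.1 = 0 ∧ g.1 = g.2.2 ∧ ∃ h : GTrip G, n h ≠ 0 ∧ h.2.2 = g.2.2)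
  then d (unit (alphaFun n g.2.2)) else 0

/-- `p_x`, the characteristic function of the unit `{x}`. -/
noncomputable def ppt (R : Type) [CommRing R] (x : InfPath G) : GTrip G → R :=
  Set.indicator {unit x} 1

/-- `f` is homogeneous of degree `k`. -/
def Homog (k : ℤ) (f : GTrip G → R) : Prop := ∀ g : GTrip G, f g ≠ 0 → g.2.1 = k

def IsCycle (η : FinPath G) : Prop :=
  0 < η.len ∧ η.src = η.vtx ∧
    ∀ i j, 0 < i → i + 1 < η.len → 0 < j → j + 1 < η.len → i ≠ j →
      G.s (η.edges i) ≠ G.r (η.edges j)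

def HasEntrance (η : FinPath G) : Prop :=
  ∃ (e : G.E) (i : ℕ), i < η.len ∧ G.r e = G.r (η.edges i) ∧ e ≠ η.edges i

/-- `z = η η η ⋯`. -/
def IsPeriodicOf (η : FinPath G) (z : InfPath G) : Prop :=
  ∀ i, z.edges i = η.edges (i % η.len)

end LPA
namespace LPA

variable {G : DirGraph}

theorem InfPath.ext' {x y : InfPath G} (h : x.edges = y.edges) : x = y := by
  cases x; cases y; simp_all

@[simp] theorem ginv_ginv (g : GTrip G) : ginv (ginv g) = g := by
  obtain ⟨a, k, b⟩ := g
  simp [ginv]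

theorem gmul_ginv_fst (η γ : GTrip G) :
    gmul (ginv η) γ = (η.2.2, -η.2.1 + γ.2.1, γ.2.2) := rfl

/-- Initial segment of an infinite path, as a finite path. -/
def pre (x : InfPath G) (L : ℕ) : FinPath G :=
  ⟨L, x.rng, x.edges, fun i _ => x.compat i, fun _ => rfl⟩

theorem mem_Zset_pre (x : InfPath G) (L : ℕ) : x ∈ Zset (pre x L) :=
  ⟨fun _ _ => rfl, rfl⟩

theorem Zset_pre_anti (x : InfPath G) {L L' : ℕ} (h : L ≤ L') :
    Zset (pre x L') ⊆ Zset (pre x L) := by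
  rintro z ⟨h1, h2⟩
  exact ⟨fun i hi => h1 i (lt_of_lt_of_le hi h), h2⟩

theorem exists_pre_not_mem {x z : InfPath G} (h : z ≠ x) :
    ∃ L, z ∉ Zset (pre x L) := by
  by_contra hc
  push_neg at hc
  refine h (InfPath.ext' (funext fun i => ?_))
  exact (hc (i + 1)).1 i (Nat.lt_succ_self i)

theorem unit_eq (x : InfPath G) : unit x = (x, 0, x) := rfl

theorem mem_unitSet_iff {S : Set (InfPath G)} {x : InfPath G} :
    unit x ∈ unitSet S ↔ x ∈ S := by
  constructor
  · rintro ⟨x', hx', heq⟩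
    have : x = x' := congrArg Prod.fst heq
    rwa [this]
  · intro hx; exact ⟨x, hx, rfl⟩

end LPA
namespace LPA

variable {G : DirGraph}

/-- The submodule of functions vanishing off the unit space. -/
def vanishOffUnits (R : Type) [CommRing R] (G : DirGraph) : Submodule R (GTrip G → R) where
  carrier := {f | ∀ g : GTrip G, g ≠ unit g.1 → f g = 0}
  add_mem' := fun {a b} ha hb g hg => by
    have := ha g hg; have := hb g hg; simp_all
  zero_mem' := fun g _ => rfl
  smul_mem' := fun c f hf g hg => by have := hf g hg; simp_all

theorem diag_le_vanish {R : Type} [CommRing R] : Diag R G ≤ vanishOffUnits R G := by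
  rw [Diag, Submodule.span_le]
  rintro f ⟨μ, rfl⟩ g hg
  apply Set.indicator_of_notMem
  rintro ⟨x, _, rfl⟩
  exact hg rfl

theorem diag_supp_unit {R : Type} [CommRing R] {f : GTrip G → R} (hf : f ∈ Diag R G)
    {g : GTrip G} (hg : f g ≠ 0) : g = unit g.1 := by
  by_contra hc
  exact hg (diag_le_vanish hf g hc)

/-- The submodule of functions with finite source- and range-fibers. -/
def fiberFinite (R : Type) [CommRing R] (G : DirGraph) : Submodule R (GTrip G → R) where
  carrier := {f | ∀ w : InfPath G, {g : GTrip G | f g ≠ 0 ∧ g.2.2 = w}.Finite ∧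
      {g : GTrip G | f g ≠ 0 ∧ g.1 = w}.Finite}
  add_mem' := fun {a b} ha hb w => by
    constructor
    · refine (((ha w).1.union (hb w).1).subset ?_)
      rintro g ⟨hg, hw⟩
      by_cases h : a g ≠ 0
      · exact Or.inl ⟨h, hw⟩
      · push_neg at h
        refine Or.inr ⟨fun hb0 => hg ?_, hw⟩
        simp [Pi.add_apply, h, hb0]
    · refine (((ha w).2.union (hb w).2).subset ?_)
      rintro g ⟨hg, hw⟩
      by_cases h : a g ≠ 0
      · exact Or.inl ⟨h, hw⟩
      · push_neg at h
        refine Or.inr ⟨fun hb0 => hg ?_, hw⟩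
        simp [Pi.add_apply, h, hb0]
  zero_mem' := fun w => by
    constructor <;> · refine Set.Finite.subset (Set.finite_empty) ?_
                      rintro g ⟨hg, _⟩; exact absurd rfl hg
  smul_mem' := fun c f hf w => by
    constructor
    · refine ((hf w).1.subset ?_)
      rintro g ⟨hg, hw⟩
      refine ⟨fun h0 => hg ?_, hw⟩
      simp [Pi.smul_apply, h0]
    · refine ((hf w).2.subset ?_)
      rintro g ⟨hg, hw⟩
      refine ⟨fun h0 => hg ?_, hw⟩
      simp [Pi.smul_apply, h0]

theorem ZZ_eq_of_src {μ ν : FinPath G} {g g' : GTrip G} (hg : g ∈ ZZ μ ν)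
    (hg' : g' ∈ ZZ μ ν) (h : g.2.2 = g'.2.2) : g = g' := by
  obtain ⟨w, hw1, hw2, hk⟩ := hg
  obtain ⟨w', hw1', hw2', hk'⟩ := hg'
  have hedge : ∀ (u : InfPath G) (p : InfPath G), IsConcat ν p u →
      ∀ i, p.edges i = u.edges (i + ν.len) := by
    intro u p hp i
    rw [hp.2 (i + ν.len)]
    simp [Nat.add_sub_cancel]
  have hww : w = w' := by
    refine InfPath.ext' (funext fun i => ?_)
    rw [hedge _ _ hw2 i, hedge _ _ hw2' i, h]
  have h1 : g.1 = g'.1 := by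
    refine InfPath.ext' (funext fun i => ?_)
    rw [hw1.2 i, hw1'.2 i, hww]
  have h2 : g.2.1 = g'.2.1 := by rw [hk, hk']
  exact Prod.ext h1 (Prod.ext h2 h)

theorem ZZ_eq_of_rng {μ ν : FinPath G} {g g' : GTrip G} (hg : g ∈ ZZ μ ν)
    (hg' : g' ∈ ZZ μ ν) (h : g.1 = g'.1) : g = g' := by
  obtain ⟨w, hw1, hw2, hk⟩ := hg
  obtain ⟨w', hw1', hw2', hk'⟩ := hg'
  have hedge : ∀ (u : InfPath G) (p : InfPath G), IsConcat μ p u →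
      ∀ i, p.edges i = u.edges (i + μ.len) := by
    intro u p hp i
    rw [hp.2 (i + μ.len)]
    simp [Nat.add_sub_cancel]
  have hww : w = w' := by
    refine InfPath.ext' (funext fun i => ?_)
    rw [hedge _ _ hw1 i, hedge _ _ hw1' i, h]
  have h2 : g.2.2 = g'.2.2 := by
    refine InfPath.ext' (funext fun i => ?_)
    rw [hw2.2 i, hw2'.2 i, hww]
  have hk2 : g.2.1 = g'.2.1 := by rw [hk, hk']
  exact Prod.ext h (Prod.ext hk2 h2)

theorem steinberg_le_fiberFinite {R : Type} [CommRing R] :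
    Steinberg R G ≤ fiberFinite R G := by
  rw [Steinberg, Submodule.span_le]
  rintro f ⟨μ, ν, -, rfl⟩ w
  have hmem : ∀ g : GTrip G, Set.indicator (ZZ μ ν) (1 : GTrip G → R) g ≠ 0 → g ∈ ZZ μ ν := by
    intro g hg
    by_contra hc
    exact hg (Set.indicator_of_notMem hc _)
  constructor
  · refine Set.Subsingleton.finite ?_
    rintro g ⟨hg, hgw⟩ g' ⟨hg', hgw'⟩
    exact ZZ_eq_of_src (hmem g hg) (hmem g' hg') (hgw.trans hgw'.symm)
  · refine Set.Subsingleton.finite ?_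
    rintro g ⟨hg, hgw⟩ g' ⟨hg', hgw'⟩
    exact ZZ_eq_of_rng (hmem g hg) (hmem g' hg') (hgw.trans hgw'.symm)

theorem steinberg_fiber_src {R : Type} [CommRing R] {f : GTrip G → R}
    (hf : f ∈ Steinberg R G) (x : InfPath G) :
    {g : GTrip G | f g ≠ 0 ∧ g.2.2 = x}.Finite :=
  (steinberg_le_fiberFinite hf x).1

theorem steinberg_fiber_rng {R : Type} [CommRing R] {f : GTrip G → R}
    (hf : f ∈ Steinberg R G) (y : InfPath G) :
    {g : GTrip G | f g ≠ 0 ∧ g.1 = y}.Finite :=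
  (steinberg_le_fiberFinite hf y).2

end LPA
namespace LPA

variable {G : DirGraph} {R : Type} [CommRing R]

theorem conv_apply (f g : GTrip G → R) (γ : GTrip G) :
    conv f g γ = ∑ᶠ η ∈ {η : GTrip G | η.1 = γ.1}, f η * g (gmul (ginv η) γ) := rfl

theorem finsum_mem_ne_zero_elim {α : Type*} {S : Set α} {F : α → R}
    (h : ∑ᶠ a ∈ S, F a ≠ 0) : ∃ a ∈ S, F a ≠ 0 := by
  by_contra hc
  push_neg at hc
  exact h (finsum_mem_of_eqOn_zero fun a ha => hc a ha)

theorem conv_ne_zero {f g : GTrip G → R} {γ : GTrip G} (h : conv f g γ ≠ 0) :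
    ∃ η : GTrip G, η.1 = γ.1 ∧ f η ≠ 0 ∧ g (gmul (ginv η) γ) ≠ 0 := by
  rw [conv_apply] at h
  obtain ⟨η, hη, hne⟩ := finsum_mem_ne_zero_elim h
  refine ⟨η, hη, fun h0 => hne ?_, fun h0 => hne ?_⟩ <;> simp [h0]

theorem conv_diag {d : GTrip G → R} (hd : d ∈ Diag R G) (f : GTrip G → R) (γ : GTrip G) :
    conv f d γ = f γ * d (unit γ.2.2) := by
  rw [conv_apply, finsum_mem_def]
  rw [finsum_eq_single _ γ]
  · rw [Set.indicator_of_mem (by exact rfl)]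
    have : gmul (ginv γ) γ = unit γ.2.2 := by
      obtain ⟨a, k, b⟩ := γ
      simp [gmul, ginv, unit_eq]
    rw [this]
  · intro η hη
    by_cases hmem : η ∈ {η : GTrip G | η.1 = γ.1}
    · rw [Set.indicator_of_mem hmem]
      rcases eq_or_ne (d (gmul (ginv η) γ)) 0 with h0 | h0
      · rw [h0, mul_zero]
      · exfalso
        have hu := diag_supp_unit hd h0
        rw [gmul_ginv_fst] at hu
        have h22 : γ.2.2 = η.2.2 := congrArg (fun p => p.2.2) hu
        have hk : -η.2.1 + γ.2.1 = 0 := congrArg (fun p => p.2.1) hu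
        refine hη (Prod.ext hmem (Prod.ext ?_ h22.symm))
        omega
    · exact Set.indicator_of_notMem hmem _

theorem conv_apply' (f g : GTrip G → R) (γ : GTrip G) :
    conv f g γ = ∑ᶠ a ∈ {a : GTrip G | a.2.2 = γ.1}, f (ginv a) * g (gmul a γ) := by
  rw [conv_apply]
  refine finsum_mem_eq_of_bijOn ginv ⟨?_, ?_, ?_⟩ ?_
  · intro η hη
    exact hη
  · intro η _ η' _ h
    have := congrArg ginv h
    rwa [ginv_ginv, ginv_ginv] at this
  · intro a ha
    exact ⟨ginv a, ha, ginv_ginv a⟩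
  · intro η _
    rw [ginv_ginv]

theorem conv_starf_apply [StarRing R] (n : GTrip G → R) (γ : GTrip G) :
    conv (starf n) n γ = ∑ᶠ a ∈ {a : GTrip G | a.2.2 = γ.1}, star (n a) * n (gmul a γ) := by
  rw [conv_apply']
  exact finsum_mem_congr rfl fun a _ => by rw [starf, ginv_ginv]

theorem conv_starf_apply_unit [StarRing R] (n : GTrip G → R) (x : InfPath G) :
    conv (starf n) n (unit x) = ∑ᶠ a ∈ {a : GTrip G | a.2.2 = x}, star (n a) * n a := by
  rw [conv_starf_apply]
  refine finsum_mem_congr rfl fun a ha => ?_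
  have : gmul a (unit x) = a := by
    obtain ⟨u, k, v⟩ := a
    simp only [Set.mem_setOf_eq] at ha
    simp [gmul, unit_eq, ha]
  rw [this]

end LPA
namespace LPA

variable {G : DirGraph} {R : Type} [CommRing R] [IsDomain R] [StarRing R]

/-- Well-definedness of `α_n`: the range of `supp(n) x` is unique. -/
theorem range_unique {n : GTrip G → R} (hn : IsNormalizer n) {a b : GTrip G}
    (ha : n a ≠ 0) (hb : n b ≠ 0) (hab : a.2.2 = b.2.2) : a.1 = b.1 := by
  classical
  -- a separating length function
  have hsep' : ∀ w : InfPath G, ∃ L, w ≠ a.2.2 → w ∉ Zset (pre a.2.2 L) := fun w => by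
    by_cases h : w = a.2.2
    · exact ⟨0, fun hc => absurd h hc⟩
    · exact ⟨(exists_pre_not_mem h).choose, fun _ => (exists_pre_not_mem h).choose_spec⟩
  choose sep hsep using hsep'
  have hT : {g : GTrip G | n g ≠ 0 ∧ g.1 = a.1}.Finite := steinberg_fiber_rng hn.1 a.1
  set L : ℕ := hT.toFinset.sup (fun g => sep g.2.2) with hL
  have key : ∀ g : GTrip G, n g ≠ 0 → g.1 = a.1 → g.2.2 ∈ Zset (pre a.2.2 L) →
      g.2.2 = a.2.2 := by
    intro g hg hg1 hgZ
    by_contra hne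
    have hgT : g ∈ hT.toFinset := by rw [Set.Finite.mem_toFinset]; exact ⟨hg, hg1⟩
    have hle : sep g.2.2 ≤ L := Finset.le_sup (f := fun g : GTrip G => sep g.2.2) hgT
    exact hsep g.2.2 hne (Zset_pre_anti _ hle hgZ)
  -- the sets A and B
  have hAfin : {g : GTrip G | n g ≠ 0 ∧ g.1 = a.1 ∧ g.2.2 = a.2.2}.Finite :=
    hT.subset (fun g hg => ⟨hg.1, hg.2.1⟩)
  have hBfin : {g : GTrip G | n g ≠ 0 ∧ g.1 = b.1 ∧ g.2.2 = a.2.2}.Finite :=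
    (steinberg_fiber_src hn.1 a.2.2).subset (fun g hg => ⟨hg.1, hg.2.2⟩)
  obtain ⟨amax, hamaxA, hamax⟩ := hAfin.exists_maximalFor (fun g => g.2.1) _
    ⟨a, ha, rfl, rfl⟩
  obtain ⟨bmin, hbminB, hbmin⟩ := hBfin.exists_minimalFor (fun g => g.2.1) _
    ⟨b, hb, rfl, hab.symm⟩
  set t : ℤ := amax.2.1 - bmin.2.1 with ht
  set d : GTrip G → R := Set.indicator (unitSet (Zset (pre a.2.2 L))) 1 with hd
  have hdD : d ∈ Diag R G := Submodule.subset_span ⟨pre a.2.2 L, rfl⟩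
  have hfD : conv (conv n d) (starf n) ∈ Diag R G := (hn.2 d hdD).1
  set γ : GTrip G := (a.1, t, b.1) with hγ
  -- compute the value of n d n* at γ
  have hval : conv (conv n d) (starf n) γ = n amax * star (n bmin) := by
    rw [conv_apply]
    simp only [conv_diag hdD]
    rw [finsum_mem_def, finsum_eq_single _ amax]
    · rw [Set.indicator_of_mem (show amax ∈ {η : GTrip G | η.1 = γ.1} from hamaxA.2.1)]
      have hd1 : d (unit amax.2.2) = 1 := by
        rw [hamaxA.2.2, hd,
          Set.indicator_of_mem (mem_unitSet_iff.2 (mem_Zset_pre _ _))]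
        rfl
      have harg : ginv (gmul (ginv amax) γ) = bmin := by
        have h1 : bmin.1 = b.1 := hbminB.2.1
        have h2 : bmin.2.2 = a.2.2 := hbminB.2.2
        have h3 : amax.2.2 = a.2.2 := hamaxA.2.2
        refine Prod.ext ?_ (Prod.ext ?_ ?_)
        · simp [gmul, ginv, h1, hγ]
        · simp only [gmul, ginv, hγ]
          omega
        · simp [gmul, ginv, h2, h3]
      rw [hd1, starf, harg, mul_one]
    · intro η hη
      by_cases hmem : η ∈ {η : GTrip G | η.1 = γ.1}
      swap
      · exact Set.indicator_of_notMem hmem _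
      rw [Set.indicator_of_mem hmem]
      by_cases hn0 : n η = 0
      · rw [hn0, zero_mul, zero_mul]
      by_cases hd0 : d (unit η.2.2) = 0
      · rw [hd0, mul_zero, zero_mul]
      by_cases hs0 : starf n (gmul (ginv η) γ) = 0
      · rw [hs0, mul_zero]
      exfalso
      -- η has source a.2.2
      have hηZ : η.2.2 ∈ Zset (pre a.2.2 L) := by
        rw [hd] at hd0
        by_contra hc
        exact hd0 (Set.indicator_of_notMem (fun hmem' => hc (mem_unitSet_iff.1 hmem')) _)
      have hη1 : η.1 = a.1 := hmem
      have hη22 : η.2.2 = a.2.2 := key η hn0 hη1 hηZ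
      have hηA : η ∈ {g : GTrip G | n g ≠ 0 ∧ g.1 = a.1 ∧ g.2.2 = a.2.2} :=
        ⟨hn0, hη1, hη22⟩
      -- the matching element lies in B
      have hζ : n (ginv (gmul (ginv η) γ)) ≠ 0 := by
        intro h0
        exact hs0 (by rw [starf, h0, star_zero])
      have hζB : ginv (gmul (ginv η) γ) ∈
          {g : GTrip G | n g ≠ 0 ∧ g.1 = b.1 ∧ g.2.2 = a.2.2} := by
        refine ⟨hζ, ?_, ?_⟩
        · simp [gmul, ginv, hγ]
        · simp [gmul, ginv, hη22]
      have hζ21 : (ginv (gmul (ginv η) γ)).2.1 = η.2.1 - t := by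
        simp only [gmul, ginv, hγ]; omega
      have h1 := hamax hηA
      have h2 : (ginv (gmul (ginv η) γ)).2.1 ≤ bmin.2.1 → bmin.2.1 ≤ (ginv (gmul (ginv η) γ)).2.1 :=
        hbmin hζB
      rw [hζ21] at h2
      simp only at h1 h2
      have hη21 : η.2.1 = amax.2.1 := by
        rcases le_or_gt η.2.1 amax.2.1 with hle | hlt
        · rcases eq_or_lt_of_le hle with heq | hlt'
          · exact heq
          · exfalso
            have : η.2.1 - t ≤ bmin.2.1 := by omega
            have := h2 this
            omega
        · have := h1 (le_of_lt hlt)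
          omega
      exact hη (Prod.ext (hη1.trans hamaxA.2.1.symm)
        (Prod.ext hη21 (hη22.trans hamaxA.2.2.symm)))
  have hne : conv (conv n d) (starf n) γ ≠ 0 := by
    rw [hval]
    exact mul_ne_zero hamaxA.1 (fun h => hbminB.1 (by rwa [star_eq_zero] at h))
  have hu := diag_supp_unit hfD hne
  have : γ.2.2 = (unit γ.1).2.2 := by rw [← hu]
  exact this.symm

end LPA
namespace LPA

variable {G : DirGraph} {R : Type} [CommRing R] [IsDomain R] [StarRing R]

theorem alpha_spec {n : GTrip G → R} (hn : IsNormalizer n) {x : InfPath G}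
    (hS : ∃ g : GTrip G, n g ≠ 0 ∧ g.2.2 = x) :
    ∀ g : GTrip G, n g ≠ 0 → g.2.2 = x → g.1 = alphaFun n x := by
  intro g hg hgx
  rw [alphaFun, dif_pos hS]
  exact range_unique hn hg hS.choose_spec.1 (hgx.trans hS.choose_spec.2.symm)

/-- Vanishing of `n* n` on nontrivial isotropy, from the normalizer property. -/
theorem conv_star_self_isotropy {n : GTrip G → R} (hn : IsNormalizer n) (x y : InfPath G)
    (hW : ∀ g : GTrip G, n g ≠ 0 → g.2.2 = x → g.1 = y) {t : ℤ} (ht : t ≠ 0) :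
    conv (starf n) n ((x, t, x) : GTrip G) = 0 := by
  set d : GTrip G → R := Set.indicator (unitSet (Zset (pre y 0))) 1 with hd
  have hdD : d ∈ Diag R G := Submodule.subset_span ⟨pre y 0, rfl⟩
  have hfD : conv (conv (starf n) d) n ∈ Diag R G := (hn.2 d hdD).2
  have hzero : conv (conv (starf n) d) n ((x, t, x) : GTrip G) = 0 := by
    by_contra hc
    have hu := diag_supp_unit hfD hc
    have : t = (0 : ℤ) := congrArg (fun p => p.2.1) hu
    exact ht this
  rw [← hzero, conv_apply, conv_apply]
  refine finsum_mem_congr rfl fun η hη => ?_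
  simp only [conv_diag hdD]
  by_cases h0 : starf n η = 0
  · rw [h0, zero_mul, zero_mul, zero_mul]
  have hnζ : n (ginv η) ≠ 0 := fun hz => h0 (by rw [starf, hz, star_zero])
  have hζ22 : (ginv η).2.2 = x := hη
  have hζ1 : (ginv η).1 = y := hW _ hnζ hζ22
  have hη22 : η.2.2 = y := hζ1
  have hd1 : d (unit η.2.2) = 1 := by
    rw [hη22, hd, Set.indicator_of_mem (mem_unitSet_iff.2 (mem_Zset_pre _ _))]
    rfl
  rw [hd1, mul_one]

end LPA
open LPA in
/-- `x ∈ dom(mn)` iff `x ∈ dom(n)` and `α_n(x) ∈ dom(m)`; in that case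
`α_m(α_n(x)) = α_{mn}(x)`. -/
theorem alpha_comp {G : DirGraph} (hrf : RowFinite G) (hns : NoSources G)
    {R : Type} [CommRing R] [IsDomain R] [StarRing R]
    (m n : GTrip G → R) (hm : IsNormalizer m) (hn : IsNormalizer n) (x : InfPath G) :
    (x ∈ domSet (conv m n) ↔ x ∈ domSet n ∧ alphaFun n x ∈ domSet m) ∧
      (x ∈ domSet (conv m n) → alphaFun m (alphaFun n x) = alphaFun (conv m n) x) := by
  classical
  by_cases hS : ∃ g : GTrip G, n g ≠ 0 ∧ g.2.2 = x
  swap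
  · -- Case 1 : no element of `supp n` has source `x`
    have hdomn : x ∉ domSet n := by
      intro h
      rw [domSet, Set.mem_setOf_eq, conv_starf_apply_unit] at h
      obtain ⟨c, hc, hne⟩ := finsum_mem_ne_zero_elim h
      exact hS ⟨c, fun h0 => hne (by rw [h0, star_zero, zero_mul]), hc⟩
    have hmn0 : ∀ c : GTrip G, c.2.2 = x → conv m n c = 0 := by
      intro c hc
      by_contra h
      obtain ⟨η, hη1, hηm, hηn⟩ := conv_ne_zero h
      exact hS ⟨gmul (ginv η) c, hηn, by simp [gmul, ginv, hc]⟩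
    have hdommn : x ∉ domSet (conv m n) := by
      intro h
      rw [domSet, Set.mem_setOf_eq, conv_starf_apply_unit] at h
      obtain ⟨c, hc, hne⟩ := finsum_mem_ne_zero_elim h
      exact hne (by rw [hmn0 c hc, star_zero, zero_mul])
    exact ⟨iff_of_false hdommn (fun h => hdomn h.1), fun h => absurd h hdommn⟩
  · have hWn := alpha_spec hn hS
    set y := alphaFun n x with hy
    by_cases hSm : ∃ g : GTrip G, m g ≠ 0 ∧ g.2.2 = y
    swap
    · -- Case 2a : no element of `supp m` has source `y`
      have hdomm : y ∉ domSet m := by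
        intro h
        rw [domSet, Set.mem_setOf_eq, conv_starf_apply_unit] at h
        obtain ⟨c, hc, hne⟩ := finsum_mem_ne_zero_elim h
        exact hSm ⟨c, fun h0 => hne (by rw [h0, star_zero, zero_mul]), hc⟩
      have hmn0 : ∀ c : GTrip G, c.2.2 = x → conv m n c = 0 := by
        intro c hc
        by_contra h
        obtain ⟨η, hη1, hηm, hηn⟩ := conv_ne_zero h
        have hb22 : (gmul (ginv η) c).2.2 = x := by simp [gmul, ginv, hc]
        have hb1 : (gmul (ginv η) c).1 = y := hWn _ hηn hb22
        have hη22 : η.2.2 = y := by simpa [gmul, ginv] using hb1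
        exact hSm ⟨η, hηm, hη22⟩
      have hdommn : x ∉ domSet (conv m n) := by
        intro h
        rw [domSet, Set.mem_setOf_eq, conv_starf_apply_unit] at h
        obtain ⟨c, hc, hne⟩ := finsum_mem_ne_zero_elim h
        exact hne (by rw [hmn0 c hc, star_zero, zero_mul])
      exact ⟨iff_of_false hdommn (fun h => hdomm h.2), fun h => absurd h hdommn⟩
    · -- Case 2b : the main case
      have hWm := alpha_spec hm hSm
      set z := alphaFun m y with hz
      set N : ℤ → R := fun k => n ((y, k, x) : GTrip G) with hNdef
      set M : ℤ → R := fun j => m ((z, j, y) : GTrip G) with hMdef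
      have hNg : ∀ g : GTrip G, n g ≠ 0 → g.2.2 = x → g = ((y, g.2.1, x) : GTrip G) :=
        fun g hg hgx => Prod.ext (hWn g hg hgx) (Prod.ext rfl hgx)
      have hMg : ∀ g : GTrip G, m g ≠ 0 → g.2.2 = y → g = ((z, g.2.1, y) : GTrip G) :=
        fun g hg hgy => Prod.ext (hWm g hg hgy) (Prod.ext rfl hgy)
      have hKfin : {k : ℤ | N k ≠ 0}.Finite := by
        have hsub : {k : ℤ | N k ≠ 0} ⊆ (fun k : ℤ => ((y, k, x) : GTrip G)) ⁻¹'
            {g : GTrip G | n g ≠ 0 ∧ g.2.2 = x} := fun k hk => ⟨hk, rfl⟩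
        refine Set.Finite.subset (Set.Finite.preimage ?_ (steinberg_fiber_src hn.1 x)) hsub
        intro k _ k' _ h
        exact congrArg (fun g : GTrip G => g.2.1) h
      have hJfin : {j : ℤ | M j ≠ 0}.Finite := by
        have hsub : {j : ℤ | M j ≠ 0} ⊆ (fun j : ℤ => ((z, j, y) : GTrip G)) ⁻¹'
            {g : GTrip G | m g ≠ 0 ∧ g.2.2 = y} := fun j hj => ⟨hj, rfl⟩
        refine Set.Finite.subset (Set.Finite.preimage ?_ (steinberg_fiber_src hm.1 y)) hsub
        intro j _ j' _ h
        exact congrArg (fun g : GTrip G => g.2.1) h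
      set KF : Finset ℤ := hKfin.toFinset with hKF
      set JF : Finset ℤ := hJfin.toFinset with hJF
      have hKmem : ∀ k : ℤ, k ∈ KF ↔ N k ≠ 0 := fun k => hKfin.mem_toFinset
      have hJmem : ∀ j : ℤ, j ∈ JF ↔ M j ≠ 0 := fun j => hJfin.mem_toFinset
      set TF : Finset ℤ := (JF ×ˢ KF).image (fun p : ℤ × ℤ => p.1 + p.2) with hTF
      -- conv m n vanishes on source fibre of x away from range z
      have hmn_ne : ∀ c : GTrip G, c.2.2 = x → c.1 ≠ z → conv m n c = 0 := by
        intro c hc hcz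
        by_contra h
        obtain ⟨η, hη1, hηm, hηn⟩ := conv_ne_zero h
        have hb22 : (gmul (ginv η) c).2.2 = x := by simp [gmul, ginv, hc]
        have hb1 : (gmul (ginv η) c).1 = y := hWn _ hηn hb22
        have hη22 : η.2.2 = y := by simpa [gmul, ginv] using hb1
        exact hcz (by rw [← hη1]; exact hWm η hηm hη22)
      -- the value of conv m n on the fibre
      have hmn_eq : ∀ t : ℤ, conv m n ((z, t, x) : GTrip G) =
          ∑ j ∈ JF, M j * N (t - j) := by
        intro t
        rw [conv_apply]
        rw [finsum_mem_eq_sum_of_subset _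
          (t := JF.image (fun j : ℤ => ((z, j, y) : GTrip G))) ?_ ?_]
        · rw [Finset.sum_image (by
            intro j _ j' _ h
            exact congrArg (fun g : GTrip G => g.2.1) h)]
          refine Finset.sum_congr rfl fun j hj => ?_
          have harg : gmul (ginv ((z, j, y) : GTrip G)) ((z, t, x) : GTrip G) =
              ((y, t - j, x) : GTrip G) := by
            refine Prod.ext rfl (Prod.ext ?_ rfl)
            show -j + t = t - j
            ring
          rw [harg]
        · rintro η ⟨hη1, hηsupp⟩
          rw [Function.mem_support] at hηsupp
          have hηm : m η ≠ 0 := fun h0 => hηsupp (by rw [h0, zero_mul])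
          have hηn : n (gmul (ginv η) ((z, t, x) : GTrip G)) ≠ 0 :=
            fun h0 => hηsupp (by rw [h0, mul_zero])
          have hb22 : (gmul (ginv η) ((z, t, x) : GTrip G)).2.2 = x := rfl
          have hb1 : (gmul (ginv η) ((z, t, x) : GTrip G)).1 = y := hWn _ hηn hb22
          have hη22 : η.2.2 = y := by simpa [gmul, ginv] using hb1
          have hηeq := hMg η hηm hη22
          have hMne : M η.2.1 ≠ 0 := by
            rw [hMdef]
            simpa [← hηeq] using hηm
          exact Finset.mem_coe.2 (Finset.mem_image.2 ⟨η.2.1, (hJmem _).2 hMne, hηeq.symm⟩)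
        · rintro η hη
          obtain ⟨j, _, rfl⟩ := Finset.mem_image.1 (Finset.mem_coe.1 hη)
          exact rfl
      -- n* n on isotropy
      have hGN : ∀ t : ℤ, conv (starf n) n ((x, t, x) : GTrip G) =
          ∑ k ∈ KF, star (N k) * N (k + t) := by
        intro t
        rw [conv_starf_apply]
        rw [finsum_mem_eq_sum_of_subset _
          (t := KF.image (fun k : ℤ => ((y, k, x) : GTrip G))) ?_ ?_]
        · rw [Finset.sum_image (by
            intro k _ k' _ h
            exact congrArg (fun g : GTrip G => g.2.1) h)]
          rfl
        · rintro a ⟨ha, hasupp⟩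
          rw [Function.mem_support] at hasupp
          have han : n a ≠ 0 := fun h0 => hasupp (by rw [h0, star_zero, zero_mul])
          have haeq := hNg a han ha
          have hNne : N a.2.1 ≠ 0 := by
            rw [hNdef]
            simpa [← haeq] using han
          exact Finset.mem_coe.2 (Finset.mem_image.2 ⟨a.2.1, (hKmem _).2 hNne, haeq.symm⟩)
        · rintro a ha
          obtain ⟨k, _, rfl⟩ := Finset.mem_image.1 (Finset.mem_coe.1 ha)
          exact rfl
      have hGM : ∀ t : ℤ, conv (starf m) m ((y, t, y) : GTrip G) =
          ∑ j ∈ JF, star (M j) * M (j + t) := by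
        intro t
        rw [conv_starf_apply]
        rw [finsum_mem_eq_sum_of_subset _
          (t := JF.image (fun j : ℤ => ((z, j, y) : GTrip G))) ?_ ?_]
        · rw [Finset.sum_image (by
            intro j _ j' _ h
            exact congrArg (fun g : GTrip G => g.2.1) h)]
          rfl
        · rintro a ⟨ha, hasupp⟩
          rw [Function.mem_support] at hasupp
          have ham : m a ≠ 0 := fun h0 => hasupp (by rw [h0, star_zero, zero_mul])
          have haeq := hMg a ham ha
          have hMne : M a.2.1 ≠ 0 := by
            rw [hMdef]
            simpa [← haeq] using ham
          exact Finset.mem_coe.2 (Finset.mem_image.2 ⟨a.2.1, (hJmem _).2 hMne, haeq.symm⟩)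
        · rintro a ha
          obtain ⟨j, _, rfl⟩ := Finset.mem_image.1 (Finset.mem_coe.1 ha)
          exact rfl
      have hGN0 : ∀ t : ℤ, t ≠ 0 → ∑ k ∈ KF, star (N k) * N (k + t) = 0 := fun t ht => by
        rw [← hGN t]; exact conv_star_self_isotropy hn x y hWn ht
      have hGM0 : ∀ t : ℤ, t ≠ 0 → ∑ j ∈ JF, star (M j) * M (j + t) = 0 := fun t ht => by
        rw [← hGM t]; exact conv_star_self_isotropy hm y z hWm ht
      have hcN_def : conv (starf n) n (unit x) = ∑ k ∈ KF, star (N k) * N k := by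
        have h0 := hGN 0
        simp only [add_zero] at h0
        rw [unit_eq, h0]
      have hcM_def : conv (starf m) m (unit y) = ∑ j ∈ JF, star (M j) * M j := by
        have h0 := hGM 0
        simp only [add_zero] at h0
        rw [unit_eq, h0]
      -- the left-hand side
      have hLHS : conv (starf (conv m n)) (conv m n) (unit x) =
          ∑ t ∈ TF, star (∑ j ∈ JF, M j * N (t - j)) * (∑ j ∈ JF, M j * N (t - j)) := by
        rw [conv_starf_apply_unit]
        rw [finsum_mem_eq_sum_of_subset _
          (t := TF.image (fun t : ℤ => ((z, t, x) : GTrip G))) ?_ ?_]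
        · rw [Finset.sum_image (by
            intro t _ t' _ h
            exact congrArg (fun g : GTrip G => g.2.1) h)]
          refine Finset.sum_congr rfl fun t _ => by rw [hmn_eq t]
        · rintro c ⟨hc, hcsupp⟩
          rw [Function.mem_support] at hcsupp
          have hmnc : conv m n c ≠ 0 := fun h0 => hcsupp (by rw [h0, star_zero, zero_mul])
          have hc1 : c.1 = z := by
            by_contra h
            exact hmnc (hmn_ne c hc h)
          have hceq : c = ((z, c.2.1, x) : GTrip G) := Prod.ext hc1 (Prod.ext rfl hc)
          have hPT : (∑ j ∈ JF, M j * N (c.2.1 - j)) ≠ 0 := by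
            rw [← hmn_eq c.2.1, ← hceq]
            exact hmnc
          obtain ⟨j, hj, hjne⟩ := Finset.exists_ne_zero_of_sum_ne_zero hPT
          have hNne : N (c.2.1 - j) ≠ 0 := fun h0 => hjne (by rw [h0, mul_zero])
          have htmem : c.2.1 ∈ TF := by
            rw [hTF]
            refine Finset.mem_image.2 ⟨(j, c.2.1 - j),
              Finset.mem_product.2 ⟨hj, (hKmem _).2 hNne⟩, ?_⟩
            show j + (c.2.1 - j) = c.2.1
            ring
          exact Finset.mem_coe.2 (Finset.mem_image.2 ⟨c.2.1, htmem, hceq.symm⟩)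
        · rintro c hc
          obtain ⟨t, _, rfl⟩ := Finset.mem_image.1 (Finset.mem_coe.1 hc)
          exact rfl
      -- the inner reindexing
      have hinner : ∀ j ∈ JF, ∀ j' : ℤ, ∑ t ∈ TF, star (N (t - j)) * N (t - j') =
          ∑ k ∈ KF, star (N k) * N (k + (j - j')) := by
        intro j hj j'
        have step1 : ∑ t ∈ TF, star (N (t - j)) * N (t - j') =
            ∑ t ∈ TF, star (N (t - j)) * N ((t - j) + (j - j')) := by
          refine Finset.sum_congr rfl fun t _ => ?_
          have : t - j' = (t - j) + (j - j') := by ring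
          rw [this]
        rw [step1]
        have step2 : ∑ t ∈ TF, star (N (t - j)) * N ((t - j) + (j - j')) =
            ∑ s ∈ TF.image (fun t : ℤ => t - j), star (N s) * N (s + (j - j')) :=
          (Finset.sum_image (f := fun s : ℤ => star (N s) * N (s + (j - j')))
            (g := fun t : ℤ => t - j) (s := TF)
            (by intro a _ b _ h; replace h : a - j = b - j := h; omega)).symm
        rw [step2]
        refine (Finset.sum_subset ?_ ?_).symm
        · intro k hk
          refine Finset.mem_image.2 ⟨j + k, ?_, by ring⟩
          rw [hTF]
          exact Finset.mem_image.2 ⟨(j, k), Finset.mem_product.2 ⟨hj, hk⟩, rfl⟩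
        · intro s _ hsK
          have hN0 : N s = 0 := by
            by_contra h
            exact hsK ((hKmem _).2 h)
          rw [hN0, star_zero, zero_mul]
      -- the algebraic identity
      have halg : ∑ t ∈ TF, star (∑ j ∈ JF, M j * N (t - j)) * (∑ j ∈ JF, M j * N (t - j)) =
          (∑ j ∈ JF, star (M j) * M j) * (∑ k ∈ KF, star (N k) * N k) := by
        have hstar : ∀ t : ℤ, star (∑ j ∈ JF, M j * N (t - j)) =
            ∑ j ∈ JF, star (M j) * star (N (t - j)) := by
          intro t
          rw [star_sum]
          exact Finset.sum_congr rfl fun j _ => star_mul' _ _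
        calc ∑ t ∈ TF, star (∑ j ∈ JF, M j * N (t - j)) * (∑ j ∈ JF, M j * N (t - j))
            = ∑ t ∈ TF, ∑ j ∈ JF, ∑ j' ∈ JF,
              (star (M j) * star (N (t - j))) * (M j' * N (t - j')) := by
              refine Finset.sum_congr rfl fun t _ => ?_
              rw [hstar t, Finset.sum_mul_sum]
          _ = ∑ j ∈ JF, ∑ j' ∈ JF, (star (M j) * M j') *
              ∑ t ∈ TF, star (N (t - j)) * N (t - j') := by
              rw [Finset.sum_comm]
              refine Finset.sum_congr rfl fun j _ => ?_
              rw [Finset.sum_comm]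
              refine Finset.sum_congr rfl fun j' _ => ?_
              rw [Finset.mul_sum]
              refine Finset.sum_congr rfl fun t _ => by ring
          _ = ∑ j ∈ JF, (star (M j) * M j) * (∑ k ∈ KF, star (N k) * N k) := by
              refine Finset.sum_congr rfl fun j hj => ?_
              rw [Finset.sum_eq_single j ?_ ?_]
              · rw [hinner j hj j]
                simp only [sub_self, add_zero]
              · intro j' _ hne
                rw [hinner j hj j', hGN0 (j - j') (sub_ne_zero.2 (Ne.symm hne)), mul_zero]
              · intro habs
                exact absurd hj habs
          _ = (∑ j ∈ JF, star (M j) * M j) * (∑ k ∈ KF, star (N k) * N k) := by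
              rw [← Finset.sum_mul]
      refine ⟨?_, ?_⟩
      · show conv (starf (conv m n)) (conv m n) (unit x) ≠ 0 ↔
          conv (starf n) n (unit x) ≠ 0 ∧ conv (starf m) m (unit y) ≠ 0
        rw [hLHS, halg, hcN_def, hcM_def]
        rw [mul_ne_zero_iff]
        exact and_comm
      · intro h
        have h' : conv (starf (conv m n)) (conv m n) (unit x) ≠ 0 := h
        have hex : ∃ c : GTrip G, conv m n c ≠ 0 ∧ c.2.2 = x := by
          rw [conv_starf_apply_unit] at h'
          obtain ⟨c, hc, hne⟩ := finsum_mem_ne_zero_elim h'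
          exact ⟨c, fun h0 => hne (by rw [h0, star_zero, zero_mul]), hc⟩
        have hfin : alphaFun (conv m n) x = z := by
          rw [alphaFun, dif_pos hex]
          have hc := hex.choose_spec
          by_contra hne
          exact hc.1 (hmn_ne _ hc.2 hne)
        rw [hfin]
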